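/- Let G be a finite abelian group, let A ⊆ G be nonempty of density α = |A|/|G|, let δ > 0, and let m ≥ 1 be an integer. Then E_{2m}(Spec_δ(A)) ≥ α·δ^{2m}·|Spec_δ(A)|^{2m}. -/

import Mathlib

open Finset Complex
open scoped ComplexConjugate


/-- The Fourier coefficient `1̂_A(ξ) = 𝔼_{x ∈ G} 1_A(x) conj(ξ(x))` of the indicator of a
finset `A` of a finite abelian group `G` at a character `ξ`. -/
noncomputable def indFourierCoeff {G : Type*} [AddCommGroup G] [Fintype G]
    (A : Finset G) (ξ : AddChar G ℂ) : ℂ :=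
  (Fintype.card G : ℂ)⁻¹ * ∑ x ∈ A, starRingEnd ℂ (ξ x)

/-- The `δ`-large spectrum `Spec_δ(A) = {ξ ∈ Ĝ : |1̂_A(ξ)| ≥ δα}` of a set `A ⊆ G` of
density `α`. -/
noncomputable def largeSpec {G : Type*} [AddCommGroup G] [Fintype G]
    (A : Finset G) (δ : ℝ) : Set (AddChar G ℂ) :=
  {ξ | δ * ((A.card : ℝ) / Fintype.card G) ≤ ‖indFourierCoeff A ξ‖}

/-- `E_{2m}(Δ)`: the number of `2m`-tuples `(a_1,…,a_m,a'_1,…,a'_m) ∈ Δ^{2m}` with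
`a_1 + ⋯ + a_m = a'_1 + ⋯ + a'_m` (in the dual group, addition of characters is
pointwise multiplication). -/
noncomputable def energy2m {G : Type*} [AddCommGroup G]
    (Δ : Set (AddChar G ℂ)) (m : ℕ) : ℕ :=
  Nat.card {p : (Fin m → AddChar G ℂ) × (Fin m → AddChar G ℂ) //
    (∀ i, p.1 i ∈ Δ) ∧ (∀ i, p.2 i ∈ Δ) ∧ (∏ i, p.1 i) = (∏ i, p.2 i)}

/-- The large spectrum has large higher energies:
`E_{2m}(Spec_δ(A)) ≥ α δ^{2m} |Spec_δ(A)|^{2m}`. -/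
theorem largeSpec_energy {G : Type*} [AddCommGroup G] [Fintype G]
    (A : Finset G) (hA : A.Nonempty) (δ : ℝ) (hδ : 0 < δ) (m : ℕ) (hm : 1 ≤ m) :
    ((A.card : ℝ) / Fintype.card G) * δ ^ (2 * m) *
        (Nat.card (largeSpec A δ) : ℝ) ^ (2 * m) ≤
      (energy2m (largeSpec A δ) m : ℝ) := by
  classical
  set N : ℕ := Fintype.card G with hNdef
  have hN : 0 < (N : ℝ) := by
    have : 0 < N := Fintype.card_pos
    exact_mod_cast this
  set α : ℝ := (A.card : ℝ) / N with hαdef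
  have hα : 0 < α := by
    apply div_pos _ hN
    exact_mod_cast Finset.card_pos.2 hA
  -- the spectrum as a finset
  set D : Finset (AddChar G ℂ) := Set.toFinset (largeSpec A δ) with hDdef
  have hDcard : (Nat.card (largeSpec A δ) : ℝ) = (D.card : ℝ) := by
    rw [Nat.card_coe_set_eq, Set.ncard_eq_toFinset_card']
  have hmemD : ∀ ξ, ξ ∈ D ↔ δ * α ≤ ‖indFourierCoeff A ξ‖ := by
    intro ξ; rw [hDdef, Set.mem_toFinset]; rfl
  -- the phases
  set z : AddChar G ℂ → ℂ := fun ξ => indFourierCoeff A ξ with hz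
  set c : AddChar G ℂ → ℂ := fun ξ => conj (z ξ) / (‖z ξ‖ : ℂ) with hc
  have hc1 : ∀ ξ, ‖c ξ‖ ≤ 1 := by
    intro ξ
    rcases eq_or_ne (z ξ) 0 with h | h
    · simp [hc, h]
    · have habs : ‖z ξ‖ ≠ 0 := by simpa using h
      simp only [hc, norm_div, Complex.norm_conj, Complex.norm_real, Real.norm_eq_abs]
      rw [_root_.abs_of_nonneg (norm_nonneg _), div_self habs]
  have hcz : ∀ ξ ∈ D, c ξ * z ξ = (‖z ξ‖ : ℂ) := by
    intro ξ hξ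
    have hzne : z ξ ≠ 0 := by
      intro h0
      have h2 : δ * α ≤ ‖z ξ‖ := (hmemD ξ).1 hξ
      rw [h0] at h2
      simp at h2
      nlinarith
    have habs : (‖z ξ‖ : ℂ) ≠ 0 := by simpa using hzne
    field_simp [hc]
    rw [show c ξ = conj (z ξ) / (‖z ξ‖ : ℂ) from rfl, div_mul_eq_mul_div, mul_comm (conj (z ξ)), Complex.mul_conj,
      Complex.normSq_eq_norm_sq, div_eq_iff habs]
    push_cast
    ring
  -- the auxiliary function
  set f : G → ℂ := fun x => ∑ ξ ∈ D, c ξ * conj (ξ x) with hf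
  -- Step A : δ α |D| ≤ N⁻¹ ∑_{x∈A} |f x|
  have hS1 : δ * α * D.card ≤ ∑ ξ ∈ D, ‖z ξ‖ := by
    calc δ * α * D.card = ∑ _ξ ∈ D, δ * α := by
          rw [sum_const, nsmul_eq_mul]; ring
      _ ≤ ∑ ξ ∈ D, ‖z ξ‖ := sum_le_sum fun ξ hξ => (hmemD ξ).1 hξ
  have hsum : ((∑ ξ ∈ D, ‖z ξ‖ : ℝ) : ℂ)
      = (N : ℂ)⁻¹ * ∑ x ∈ A, f x := by
    push_cast
    calc ∑ ξ ∈ D, (‖z ξ‖ : ℂ) = ∑ ξ ∈ D, c ξ * z ξ :=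
          (sum_congr rfl hcz).symm
      _ = ∑ ξ ∈ D, (N : ℂ)⁻¹ * ∑ x ∈ A, c ξ * conj (ξ x) := by
          refine sum_congr rfl fun ξ _ => ?_
          rw [show z ξ = (N : ℂ)⁻¹ * ∑ x ∈ A, conj (ξ x) from rfl, mul_sum]
          rw [mul_sum, mul_sum]
          exact sum_congr rfl fun x _ => by ring
      _ = (N : ℂ)⁻¹ * ∑ ξ ∈ D, ∑ x ∈ A, c ξ * conj (ξ x) := by rw [mul_sum]
      _ = (N : ℂ)⁻¹ * ∑ x ∈ A, f x := by rw [sum_comm]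
  have hstepA : δ * α * D.card ≤ (N : ℝ)⁻¹ * ∑ x ∈ A, ‖f x‖ := by
    refine hS1.trans ?_
    have h1 : (∑ ξ ∈ D, ‖z ξ‖)
        = ‖((∑ ξ ∈ D, ‖z ξ‖ : ℝ) : ℂ)‖ := by
      rw [Complex.norm_real, Real.norm_eq_abs, _root_.abs_of_nonneg]
      exact sum_nonneg fun ξ _ => norm_nonneg _
    rw [h1, hsum, norm_mul]
    have h2 : ‖(N : ℂ)⁻¹‖ = (N : ℝ)⁻¹ := by
      rw [norm_inv]; simp
    rw [h2]
    gcongr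
    exact (norm_sum_le _ _)
  -- the solution-counting finset
  set Sol : Finset ((Fin m → AddChar G ℂ) × (Fin m → AddChar G ℂ)) :=
    univ.filter (fun p => (∀ i, p.1 i ∈ largeSpec A δ) ∧ (∀ i, p.2 i ∈ largeSpec A δ) ∧
      (∏ i, p.1 i) = (∏ i, p.2 i)) with hSol
  have hE : (energy2m (largeSpec A δ) m : ℝ) = (Sol.card : ℝ) := by
    rw [energy2m, Nat.card_eq_fintype_card, Fintype.card_subtype]
  -- Step D : ∑_{x∈G} |f x|^{2m} ≤ N * Sol.card
  set P : Finset (Fin m → AddChar G ℂ) := Fintype.piFinset (fun _ : Fin m => D) with hP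
  have hfpow : ∀ x : G, f x ^ m = ∑ p ∈ P, ∏ i, (c (p i) * conj (p i x)) := by
    intro x
    rw [show f x ^ m = ∏ _i : Fin m, f x by
      rw [prod_const, card_univ, Fintype.card_fin]]
    exact Finset.prod_univ_sum _ _
  have hfconjpow : ∀ x : G, conj (f x) ^ m
      = ∑ q ∈ P, ∏ j, (conj (c (q j)) * (q j x)) := by
    intro x
    have h1 : conj (f x) = ∑ ξ ∈ D, conj (c ξ) * ξ x := by
      rw [hf]
      rw [map_sum]
      exact sum_congr rfl fun ξ _ => by rw [map_mul, Complex.conj_conj]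
    rw [h1, show (∑ ξ ∈ D, conj (c ξ) * ξ x) ^ m
      = ∏ _j : Fin m, (∑ ξ ∈ D, conj (c ξ) * ξ x) by
      rw [prod_const, card_univ, Fintype.card_fin]]
    exact Finset.prod_univ_sum _ _
  have hchar : ∀ (p q : Fin m → AddChar G ℂ),
      ∑ x : G, (∏ i, conj (p i x)) * (∏ j, q j x)
        = if (∏ i, p i) = (∏ j, q j) then (N : ℂ) else 0 := by
    intro p q
    have h1 : ∀ x : G, (∏ i, conj (p i x)) * (∏ j, q j x)
        = ((∏ i, p i)⁻¹ * ∏ j, q j) x := by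
      intro x
      rw [AddChar.mul_apply, AddChar.prod_apply]
      congr 1
      rw [AddChar.inv_apply', AddChar.inv_apply_eq_conj, AddChar.prod_apply, map_prod]
    rw [sum_congr rfl fun x _ => h1 x, AddChar.sum_eq_ite]
    congr 1
    simp only [eq_iff_iff]
    rw [show (0 : AddChar G ℂ) = 1 from rfl, inv_mul_eq_one]
  have hstepD : ∑ x : G, (‖f x‖) ^ (2 * m) ≤ (N : ℝ) * Sol.card := by
    have hCeq : ((∑ x : G, (‖f x‖) ^ (2 * m) : ℝ) : ℂ)
        = ∑ p ∈ P, ∑ q ∈ P, ((∏ i, c (p i)) * (∏ j, conj (c (q j))))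
            * (if (∏ i, p i) = (∏ j, q j) then (N : ℂ) else 0) := by
      push_cast
      calc ∑ x : G, (‖f x‖ : ℂ) ^ (2 * m)
          = ∑ x : G, f x ^ m * conj (f x) ^ m := by
            refine sum_congr rfl fun x _ => ?_
            have hmc : f x * conj (f x)
                = (‖f x‖ : ℂ) * (‖f x‖ : ℂ) := by
              rw [Complex.mul_conj, Complex.normSq_eq_norm_sq]
              push_cast
              ring
            calc (‖f x‖ : ℂ) ^ (2 * m)
                = ((‖f x‖ : ℂ) * (‖f x‖ : ℂ)) ^ m := by
                  rw [pow_mul, sq]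
              _ = (f x * conj (f x)) ^ m := by rw [hmc]
              _ = f x ^ m * conj (f x) ^ m := mul_pow _ _ m
        _ = ∑ x : G, ∑ p ∈ P, ∑ q ∈ P,
              (∏ i, (c (p i) * conj (p i x))) * (∏ j, (conj (c (q j)) * (q j x))) := by
            refine sum_congr rfl fun x _ => ?_
            rw [hfpow x, hfconjpow x, sum_mul_sum]
        _ = ∑ p ∈ P, ∑ q ∈ P, ∑ x : G,
              (∏ i, (c (p i) * conj (p i x))) * (∏ j, (conj (c (q j)) * (q j x))) := by
            rw [sum_comm]
            exact sum_congr rfl fun p _ => sum_comm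
        _ = ∑ p ∈ P, ∑ q ∈ P, ((∏ i, c (p i)) * (∏ j, conj (c (q j))))
              * (if (∏ i, p i) = (∏ j, q j) then (N : ℂ) else 0) := by
            refine sum_congr rfl fun p _ => sum_congr rfl fun q _ => ?_
            rw [← hchar p q, mul_sum]
            refine sum_congr rfl fun x _ => ?_
            rw [prod_mul_distrib, prod_mul_distrib]
            ring
    have habs : ∑ x : G, (‖f x‖) ^ (2 * m)
        ≤ ∑ p ∈ P, ∑ q ∈ P, (if (∏ i, p i) = (∏ j, q j) then (N : ℝ) else 0) := by
      have h0 : ∑ x : G, (‖f x‖) ^ (2 * m)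
          = ‖((∑ x : G, (‖f x‖) ^ (2 * m) : ℝ) : ℂ)‖ := by
        rw [Complex.norm_real, Real.norm_eq_abs, _root_.abs_of_nonneg]
        exact sum_nonneg fun x _ => pow_nonneg (norm_nonneg _) _
      rw [h0, hCeq]
      refine (norm_sum_le _ _).trans (sum_le_sum fun p _ => ?_)
      refine (norm_sum_le _ _).trans (sum_le_sum fun q _ => ?_)
      rw [norm_mul, norm_mul]
      have hw1 : ‖∏ i, c (p i)‖ ≤ 1 := by
        rw [norm_prod]
        exact Finset.prod_le_one (fun i _ => norm_nonneg _)
          (fun i _ => hc1 _)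
      have hw2 : ‖∏ j, conj (c (q j))‖ ≤ 1 := by
        rw [norm_prod]
        refine Finset.prod_le_one (fun j _ => norm_nonneg _)
          (fun j _ => ?_)
        rw [Complex.norm_conj]; exact hc1 _
      have hite : ‖if (∏ i, p i) = (∏ j, q j) then (N : ℂ) else 0‖
          = (if (∏ i, p i) = (∏ j, q j) then (N : ℝ) else 0) := by
        split_ifs <;> simp
      rw [← hite]
      have hnn0 : (0:ℝ) ≤ ‖∏ i, c (p i)‖ := norm_nonneg _
      have hnn1 : (0:ℝ) ≤ ‖∏ j, conj (c (q j))‖ := norm_nonneg _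
      have hnn2 : (0:ℝ) ≤ ‖if (∏ i, p i) = (∏ j, q j) then (N : ℂ) else 0‖ := norm_nonneg _
      nlinarith [mul_le_one₀ hw1 hnn1 hw2]
    refine habs.trans (le_of_eq ?_)
    have hfilter : (P ×ˢ P).filter (fun pq => (∏ i, pq.1 i) = (∏ j, pq.2 j)) = Sol := by
      ext pq
      simp only [hSol, Finset.mem_filter, Finset.mem_product, Finset.mem_univ, true_and,
        hP, Fintype.mem_piFinset, hDdef, Set.mem_toFinset]
      tauto
    rw [← Finset.sum_product', ← Finset.sum_filter, hfilter, Finset.sum_const,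
      nsmul_eq_mul, mul_comm]
  -- Step B : Jensen
  obtain ⟨k, hk⟩ : ∃ k, 2 * m = k + 1 := ⟨2 * m - 1, by omega⟩
  have hstepB : (∑ x ∈ A, ‖f x‖) ^ (2 * m)
      ≤ (A.card : ℝ) ^ k * ∑ x ∈ A, (‖f x‖) ^ (2 * m) := by
    rw [hk]
    have := pow_sum_div_card_le_sum_pow
      (f := fun x => ‖f x‖) (s := A)
      (fun i _ => norm_nonneg _) k
    rw [div_le_iff₀ (by positivity)] at this
    calc (∑ x ∈ A, ‖f x‖) ^ (k + 1)
        ≤ (∑ x ∈ A, (‖f x‖) ^ (k + 1)) * (A.card : ℝ) ^ k := this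
      _ = (A.card : ℝ) ^ k * ∑ x ∈ A, (‖f x‖) ^ (k + 1) := by ring
  have hstepC : ∑ x ∈ A, (‖f x‖) ^ (2 * m)
      ≤ ∑ x : G, (‖f x‖) ^ (2 * m) :=
    Finset.sum_le_sum_of_subset_of_nonneg (Finset.subset_univ A)
      (fun x _ _ => pow_nonneg (norm_nonneg _) _)
  -- combine
  have key : (δ * α * (D.card : ℝ)) ^ (2 * m)
      ≤ ((N : ℝ)⁻¹) ^ (2 * m) * ((A.card : ℝ) ^ k * ((N : ℝ) * Sol.card)) := by
    calc (δ * α * (D.card : ℝ)) ^ (2 * m)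
        ≤ ((N : ℝ)⁻¹ * ∑ x ∈ A, ‖f x‖) ^ (2 * m) := by
          apply pow_le_pow_left₀ (by positivity) hstepA
      _ = ((N : ℝ)⁻¹) ^ (2 * m) * (∑ x ∈ A, ‖f x‖) ^ (2 * m) := by
          rw [mul_pow]
      _ ≤ ((N : ℝ)⁻¹) ^ (2 * m) * ((A.card : ℝ) ^ k
            * ∑ x ∈ A, (‖f x‖) ^ (2 * m)) := by
          gcongr
      _ ≤ ((N : ℝ)⁻¹) ^ (2 * m) * ((A.card : ℝ) ^ k * ((N : ℝ) * Sol.card)) := by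
          gcongr
          exact hstepC.trans hstepD
  have hR : ((N : ℝ)⁻¹) ^ (2 * m) * ((A.card : ℝ) ^ k * ((N : ℝ) * Sol.card))
      = α ^ k * Sol.card := by
    rw [hk, hαdef, div_pow]
    field_simp
    linear_combination ((Sol.card : ℝ) * (N : ℝ) ^ k * ((N : ℝ) ^ k)⁻¹) * mul_inv_cancel₀ hN.ne'
      + (Sol.card : ℝ) * mul_inv_cancel₀ (pow_ne_zero k hN.ne')
  rw [hDcard, hE]
  have hαk : (0 : ℝ) < α ^ k := pow_pos hα k
  rw [← mul_le_mul_iff_of_pos_left hαk]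
  calc α ^ k * (α * δ ^ (2 * m) * (D.card : ℝ) ^ (2 * m))
      = (δ * α * (D.card : ℝ)) ^ (2 * m) := by
        rw [hk, mul_pow, mul_pow]
        ring
    _ ≤ α ^ k * Sol.card := by rw [← hR]; exact key
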